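/- The map sending a bounded multiplicative seminorm x ∈ BSC_k(X) to the family {U ∈ CO(X) : x(1_U) ≠ 0} is a homeomorphism from BSC_k(X) onto the space UF(X) of ultrafilters of the Boolean algebra of clopen subsets of X. -/

import Mathlib

open Set Topology BoundedContinuousFunction

/-- An ultrafilter of the Boolean algebra `CO(X)` of clopen subsets of `X`: a family of
clopen sets not containing `∅`, closed under binary intersections, upward closed (within
clopen sets), and containing `U` or `Uᶜ` for every clopen `U`. -/
structure ClopenUltrafilter (X : Type*) [TopologicalSpace X] where
  sets : Set (Set X)
  isClopen_of_mem : ∀ U ∈ sets, IsClopen U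
  empty_not_mem : ∅ ∉ sets
  inter_mem : ∀ U ∈ sets, ∀ V ∈ sets, U ∩ V ∈ sets
  mem_of_superset : ∀ U ∈ sets, ∀ V : Set X, IsClopen V → U ⊆ V → V ∈ sets
  mem_or_compl_mem : ∀ U : Set X, IsClopen U → U ∈ sets ∨ Uᶜ ∈ sets

/-- The topology on `UF(X)` with open basis the sets `{F : U ∈ F}` for `U` clopen. -/
instance (X : Type*) [TopologicalSpace X] : TopologicalSpace (ClopenUltrafilter X) :=
  TopologicalSpace.generateFrom
    {S | ∃ U : Set X, IsClopen U ∧ S = {F : ClopenUltrafilter X | U ∈ F.sets}}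

/-- The principal ultrafilter of clopen sets at a point `x`. -/
def principalCU (X : Type*) [TopologicalSpace X] (x : X) : ClopenUltrafilter X where
  sets := {U : Set X | IsClopen U ∧ x ∈ U}
  isClopen_of_mem := fun _ hU => hU.1
  empty_not_mem := fun h => Set.notMem_empty x h.2
  inter_mem := fun U hU V hV => ⟨hU.1.inter hV.1, hU.2, hV.2⟩
  mem_of_superset := fun U hU V hV hUV => ⟨hV, hUV hU.2⟩
  mem_or_compl_mem := fun U hU => by
    by_cases hx : x ∈ U
    · exact Or.inl ⟨hU, hx⟩
    · exact Or.inr ⟨hU.compl, hx⟩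

/-- A cluster point of an ultrafilter of clopen sets: a point all of whose clopen
neighbourhoods belong to the ultrafilter. -/
def ClopenUltrafilter.IsClusterPoint {X : Type*} [TopologicalSpace X]
    (F : ClopenUltrafilter X) (x : X) : Prop :=
  ∀ U : Set X, IsClopen U → x ∈ U → U ∈ F.sets

/-- The indicator function of a clopen set, as a bounded continuous `k`-valued function. -/
noncomputable def indicatorBCF {X : Type*} [TopologicalSpace X] (k : Type*) [NormedField k]
    {U : Set X} (hU : IsClopen U) : BoundedContinuousFunction X k where
  toFun := U.indicator 1
  continuous_toFun := continuous_indicator (by simp [hU]) continuous_const.continuousOn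
  map_bounded' := ⟨1, fun x y => by
    by_cases hx : x ∈ U <;> by_cases hy : y ∈ U <;>
      simp [hx, hy, dist_eq_norm, Set.indicator_of_mem, Set.indicator_of_notMem]⟩

/-- The family `F_m = {U ∈ CO(X) : 1_U ∉ m}` attached to an ideal `m` of `C_bd(X,k)`. -/
def idealUF {X : Type*} [TopologicalSpace X] (k : Type*) [NormedField k]
    (m : Ideal (BoundedContinuousFunction X k)) : Set (Set X) :=
  {U : Set X | ∃ hU : IsClopen U, indicatorBCF k hU ∉ m}

/-- `‖f‖_F = inf_{U ∈ F} sup_{x ∈ U} ‖f x‖`. -/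
noncomputable def ufSeminorm {X : Type*} [TopologicalSpace X] (k : Type*) [NormedField k]
    (F : ClopenUltrafilter X) (f : BoundedContinuousFunction X k) : ℝ :=
  ⨅ U ∈ F.sets, ⨆ x ∈ U, ‖f x‖

/-- A bounded multiplicative seminorm on `C_bd(X,k)`, i.e. a point of Berkovich's spectrum
`BSC_k(X) = M_k(C_bd(X,k))`. -/
structure BerkovichPoint (X : Type*) [TopologicalSpace X] (k : Type*) [NormedField k] where
  toFun : BoundedContinuousFunction X k → ℝ
  nonneg : ∀ f, 0 ≤ toFun f
  add_le : ∀ f g, toFun (f + g) ≤ max (toFun f) (toFun g)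
  mul_eq : ∀ f g, toFun (f * g) = toFun f * toFun g
  algebraMap_eq : ∀ a : k, toFun (algebraMap k (BoundedContinuousFunction X k) a) = ‖a‖
  le_norm : ∀ f, toFun f ≤ ‖f‖

/-- Berkovich's spectrum carries the topology of pointwise convergence: the weakest topology
making `x ↦ x(f)` continuous for each `f`. -/
instance (X : Type*) [TopologicalSpace X] (k : Type*) [NormedField k] :
    TopologicalSpace (BerkovichPoint X k) :=
  TopologicalSpace.induced (fun x : BerkovichPoint X k => x.toFun) Pi.topologicalSpace


section BerkoAux

variable {X : Type*} [TopologicalSpace X] {k : Type*} [NormedField k] [IsUltrametricDist k]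

theorem CU.ext' {F G : ClopenUltrafilter X} (h : F.sets = G.sets) : F = G := by
  cases F; cases G; simpa using h

theorem BP.ext' {x y : BerkovichPoint X k} (h : x.toFun = y.toFun) : x = y := by
  cases x; cases y; simpa using h

theorem BP.map_zero' (x : BerkovichPoint X k) : x.toFun 0 = 0 := by
  simpa using x.algebraMap_eq 0

theorem BP.map_one' (x : BerkovichPoint X k) : x.toFun 1 = 1 := by
  simpa using x.algebraMap_eq 1

theorem CU.univ_mem (F : ClopenUltrafilter X) : Set.univ ∈ F.sets := by
  rcases F.mem_or_compl_mem Set.univ isClopen_univ with h | h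
  · exact h
  · rw [Set.compl_univ] at h; exact absurd h F.empty_not_mem

theorem CU.nonempty_of_mem (F : ClopenUltrafilter X) {U : Set X} (hU : U ∈ F.sets) :
    U.Nonempty := by
  rcases U.eq_empty_or_nonempty with rfl | h
  · exact absurd hU F.empty_not_mem
  · exact h

theorem le_add_all {a b : ℝ} (h : ∀ ε : ℝ, 0 < ε → a ≤ b + ε) : a ≤ b := by
  by_contra hab
  push_neg at hab
  have := h ((a - b) / 2) (by linarith)
  linarith

theorem ind_apply_mem {U : Set X} (hU : IsClopen U) {y : X} (hy : y ∈ U) :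
    indicatorBCF k hU y = 1 := by
  show U.indicator 1 y = 1
  rw [Set.indicator_of_mem hy]; rfl

theorem ind_apply_not_mem {U : Set X} (hU : IsClopen U) {y : X} (hy : y ∉ U) :
    indicatorBCF k hU y = 0 := by
  show U.indicator 1 y = 0
  rw [Set.indicator_of_notMem hy]

theorem ind_empty (h : IsClopen (∅ : Set X)) :
    indicatorBCF k h = (0 : BoundedContinuousFunction X k) := by
  ext y
  rw [ind_apply_not_mem h (Set.notMem_empty y)]
  simp

theorem ind_mul {U V : Set X} (hU : IsClopen U) (hV : IsClopen V) :
    indicatorBCF k hU * indicatorBCF k hV = indicatorBCF k (hU.inter hV) := by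
  ext y
  rw [BoundedContinuousFunction.mul_apply]
  by_cases h1 : y ∈ U
  · by_cases h2 : y ∈ V
    · rw [ind_apply_mem hU h1, ind_apply_mem hV h2, ind_apply_mem (hU.inter hV) ⟨h1, h2⟩,
        one_mul]
    · rw [ind_apply_not_mem hV h2, ind_apply_not_mem (hU.inter hV) (fun h => h2 h.2), mul_zero]
  · rw [ind_apply_not_mem hU h1, ind_apply_not_mem (hU.inter hV) (fun h => h1 h.1), zero_mul]

theorem ind_mul_self {U : Set X} (hU : IsClopen U) :
    indicatorBCF k hU * indicatorBCF k hU = indicatorBCF k hU := by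
  ext y
  rw [BoundedContinuousFunction.mul_apply]
  by_cases h : y ∈ U
  · rw [ind_apply_mem hU h, one_mul]
  · rw [ind_apply_not_mem hU h, zero_mul]

theorem ind_mul_of_subset {U V : Set X} (hU : IsClopen U) (hV : IsClopen V) (hUV : U ⊆ V) :
    indicatorBCF k hU * indicatorBCF k hV = indicatorBCF k hU := by
  ext y
  rw [BoundedContinuousFunction.mul_apply]
  by_cases h : y ∈ U
  · rw [ind_apply_mem hU h, ind_apply_mem hV (hUV h), one_mul]
  · rw [ind_apply_not_mem hU h, zero_mul]

theorem ind_add_compl {U : Set X} (hU : IsClopen U) :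
    indicatorBCF k hU + indicatorBCF k hU.compl = 1 := by
  ext y
  rw [BoundedContinuousFunction.add_apply]
  by_cases h : y ∈ U
  · rw [ind_apply_mem hU h, ind_apply_not_mem hU.compl (fun hc => hc h)]
    simp
  · rw [ind_apply_not_mem hU h, ind_apply_mem hU.compl h]
    simp

theorem ind_zero_or_one (x : BerkovichPoint X k) {U : Set X} (hU : IsClopen U) :
    x.toFun (indicatorBCF k hU) = 0 ∨ x.toFun (indicatorBCF k hU) = 1 := by
  have h := x.mul_eq (indicatorBCF k hU) (indicatorBCF k hU)
  rw [ind_mul_self hU] at h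
  rcases eq_or_ne (x.toFun (indicatorBCF k hU)) 0 with h0 | h0
  · exact Or.inl h0
  · right
    have h' : x.toFun (indicatorBCF k hU) * x.toFun (indicatorBCF k hU) =
        x.toFun (indicatorBCF k hU) * 1 := by rw [mul_one]; exact h.symm
    exact mul_left_cancel₀ h0 h'

theorem ind_compl_eq_one (x : BerkovichPoint X k) {U : Set X} (hU : IsClopen U)
    (h : x.toFun (indicatorBCF k hU) = 0) : x.toFun (indicatorBCF k hU.compl) = 1 := by
  rcases ind_zero_or_one x hU.compl with h1 | h1
  · exfalso
    have h2 := x.add_le (indicatorBCF k hU) (indicatorBCF k hU.compl)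
    rw [ind_add_compl hU, BP.map_one' x, h, h1] at h2
    norm_num at h2
  · exact h1

/-- The ultrafilter of clopen sets attached to a bounded multiplicative seminorm. -/
noncomputable def toUF (x : BerkovichPoint X k) : ClopenUltrafilter X where
  sets := {U : Set X | ∃ hU : IsClopen U, x.toFun (indicatorBCF k hU) ≠ 0}
  isClopen_of_mem := fun _ hU => hU.1
  empty_not_mem := fun ⟨h, hne⟩ => hne (by rw [ind_empty h]; exact BP.map_zero' x)
  inter_mem := by
    rintro U ⟨hU, hxU⟩ V ⟨hV, hxV⟩
    refine ⟨hU.inter hV, ?_⟩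
    rw [← ind_mul hU hV, x.mul_eq]
    exact mul_ne_zero hxU hxV
  mem_of_superset := by
    rintro U ⟨hU, hxU⟩ V hV hUV
    refine ⟨hV, fun h0 => hxU ?_⟩
    have h := x.mul_eq (indicatorBCF k hU) (indicatorBCF k hV)
    rw [ind_mul_of_subset hU hV hUV, h0, mul_zero] at h
    exact h
  mem_or_compl_mem := by
    intro U hU
    rcases eq_or_ne (x.toFun (indicatorBCF k hU)) 0 with h0 | h0
    · exact Or.inr ⟨hU.compl, by rw [ind_compl_eq_one x hU h0]; norm_num⟩
    · exact Or.inl ⟨hU, h0⟩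

/-- Supremum of the norm of `f` over `U`. -/
noncomputable def nsup (f : BoundedContinuousFunction X k) (U : Set X) : ℝ :=
  sSup ((fun y => ‖f y‖) '' U)

theorem nsup_le {f : BoundedContinuousFunction X k} {U : Set X} {C : ℝ} (hC : 0 ≤ C)
    (h : ∀ y ∈ U, ‖f y‖ ≤ C) : nsup f U ≤ C :=
  Real.sSup_le (by rintro r ⟨y, hy, rfl⟩; exact h y hy) hC

theorem le_nsup (f : BoundedContinuousFunction X k) {U : Set X} {y : X} (hy : y ∈ U) :
    ‖f y‖ ≤ nsup f U :=
  le_csSup ⟨‖f‖, by rintro r ⟨z, hz, rfl⟩; exact f.norm_coe_le_norm z⟩ ⟨y, hy, rfl⟩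

theorem nsup_nonneg (f : BoundedContinuousFunction X k) {U : Set X} (h : U.Nonempty) :
    0 ≤ nsup f U :=
  (norm_nonneg _).trans (le_nsup f h.choose_spec)

/-- The seminorm attached to an ultrafilter of clopen sets. -/
noncomputable def sem (F : ClopenUltrafilter X) (f : BoundedContinuousFunction X k) : ℝ :=
  sInf (nsup f '' F.sets)

theorem sem_nonneg (F : ClopenUltrafilter X) (f : BoundedContinuousFunction X k) :
    0 ≤ sem F f :=
  Real.sInf_nonneg (by rintro r ⟨U, hU, rfl⟩; exact nsup_nonneg f (CU.nonempty_of_mem F hU))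

theorem sem_le (F : ClopenUltrafilter X) {f : BoundedContinuousFunction X k} {U : Set X}
    (hU : U ∈ F.sets) : sem F f ≤ nsup f U :=
  csInf_le ⟨0, by rintro r ⟨V, hV, rfl⟩; exact nsup_nonneg f (CU.nonempty_of_mem F hV)⟩
    ⟨U, hU, rfl⟩

theorem le_sem (F : ClopenUltrafilter X) {f : BoundedContinuousFunction X k} {a : ℝ}
    (h : ∀ U ∈ F.sets, a ≤ nsup f U) : a ≤ sem F f :=
  le_csInf ⟨nsup f Set.univ, Set.mem_image_of_mem _ (CU.univ_mem F)⟩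
    (by rintro r ⟨U, hU, rfl⟩; exact h U hU)

theorem exists_sem_lt (F : ClopenUltrafilter X) {f : BoundedContinuousFunction X k} {c : ℝ}
    (h : sem F f < c) : ∃ U ∈ F.sets, nsup f U < c := by
  obtain ⟨r, ⟨U, hU, rfl⟩, hr⟩ :=
    exists_lt_of_csInf_lt ⟨nsup f Set.univ, Set.mem_image_of_mem _ (CU.univ_mem F)⟩ h
  exact ⟨U, hU, hr⟩

theorem memB (F : ClopenUltrafilter X) {f : BoundedContinuousFunction X k} {W : Set X} {c : ℝ}
    (hW : IsClopen W) (hge : ∀ y ∉ W, c ≤ ‖f y‖) (hlt : sem F f < c) : W ∈ F.sets := by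
  rcases F.mem_or_compl_mem W hW with h | h
  · exact h
  · exfalso
    obtain ⟨U, hU, hnU⟩ := exists_sem_lt F hlt
    obtain ⟨y, hyU, hyW⟩ := CU.nonempty_of_mem F (F.inter_mem U hU _ h)
    exact absurd ((hge y hyW).trans (le_nsup f hyU)) (not_le.mpr hnU)

theorem memC (F : ClopenUltrafilter X) {f : BoundedContinuousFunction X k} {W : Set X} {t : ℝ}
    (hW : IsClopen W) (hle : ∀ y ∉ W, ‖f y‖ ≤ t) (hlt : t < sem F f) : W ∈ F.sets := by
  rcases F.mem_or_compl_mem W hW with h | h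
  · exact h
  · exfalso
    rcases le_or_gt 0 t with ht | ht
    · have h2 : sem F f ≤ t := (sem_le F h).trans (nsup_le ht (fun y hy => hle y hy))
      exact absurd hlt (not_lt.mpr h2)
    · obtain ⟨y, hy⟩ := CU.nonempty_of_mem F h
      exact absurd ((norm_nonneg (f y)).trans (hle y hy)) (not_le.mpr ht)

theorem isClopen_norm_lt (f : BoundedContinuousFunction X k) (c : ℝ) :
    IsClopen {y | ‖f y‖ < c} := by
  have h : {y | ‖f y‖ < c} = f ⁻¹' Metric.ball 0 c := by
    ext y; simp [mem_ball_zero_iff]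
  rw [h]
  exact (IsUltrametricDist.isClopen_ball (0 : k) c).preimage f.continuous

/-- The bounded multiplicative seminorm attached to an ultrafilter of clopen sets. -/
noncomputable def ofUF (F : ClopenUltrafilter X) : BerkovichPoint X k where
  toFun := sem F
  nonneg := sem_nonneg F
  add_le := by
    intro f g
    by_contra hcon
    push_neg at hcon
    obtain ⟨U, hU, hfU⟩ := exists_sem_lt F ((le_max_left (sem F f) (sem F g)).trans_lt hcon)
    obtain ⟨V, hV, hgV⟩ := exists_sem_lt F ((le_max_right (sem F f) (sem F g)).trans_lt hcon)
    have hUV := F.inter_mem U hU V hV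
    have h1 : sem F (f + g) ≤ max (nsup f U) (nsup g V) := by
      refine (sem_le F hUV).trans (nsup_le ?_ ?_)
      · exact le_max_of_le_left (nsup_nonneg f (CU.nonempty_of_mem F hU))
      · intro y hy
        calc ‖(f + g) y‖ = ‖f y + g y‖ := by rw [BoundedContinuousFunction.add_apply]
          _ ≤ max ‖f y‖ ‖g y‖ := IsUltrametricDist.norm_add_le_max _ _
          _ ≤ max (nsup f U) (nsup g V) := max_le_max (le_nsup f hy.1) (le_nsup g hy.2)
    exact lt_irrefl _ (h1.trans_lt (max_lt hfU hgV))
  mul_eq := by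
    intro f g
    have ha0 : 0 ≤ sem F f := sem_nonneg F f
    have hb0 : 0 ≤ sem F g := sem_nonneg F g
    apply le_antisymm
    · apply le_add_all
      intro ε hε
      set a := sem F f with ha
      set b := sem F g with hb
      set δ := min 1 (ε / (a + b + 2)) with hδdef
      have hδ : 0 < δ := lt_min one_pos (div_pos hε (by linarith))
      obtain ⟨U, hU, hfU⟩ := exists_sem_lt F (show a < a + δ by linarith)
      obtain ⟨V, hV, hgV⟩ := exists_sem_lt F (show b < b + δ by linarith)
      have hUV := F.inter_mem U hU V hV
      have h1 : sem F (f * g) ≤ (a + δ) * (b + δ) := by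
        refine (sem_le F hUV).trans (nsup_le (mul_nonneg (by linarith) (by linarith)) ?_)
        intro y hy
        calc ‖(f * g) y‖ = ‖f y‖ * ‖g y‖ := by
              rw [BoundedContinuousFunction.mul_apply, norm_mul]
          _ ≤ (a + δ) * (b + δ) :=
            mul_le_mul ((le_nsup f hy.1).trans hfU.le) ((le_nsup g hy.2).trans hgV.le)
              (norm_nonneg _) (by linarith)
      refine h1.trans ?_
      have hδ1 : δ ≤ 1 := min_le_left _ _
      have hδ2 : δ * (a + b + 2) ≤ ε := by
        calc δ * (a + b + 2) ≤ (ε / (a + b + 2)) * (a + b + 2) :=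
              mul_le_mul_of_nonneg_right (min_le_right _ _) (by linarith)
          _ = ε := div_mul_cancel₀ ε (by positivity)
      nlinarith [mul_le_mul_of_nonneg_left hδ1 hδ.le, hδ.le]
    · rcases eq_or_lt_of_le ha0 with hA | hA
      · rw [← hA, zero_mul]; exact sem_nonneg F _
      rcases eq_or_lt_of_le hb0 with hB | hB
      · rw [← hB, mul_zero]; exact sem_nonneg F _
      have key : ∀ t s : ℝ, 0 ≤ t → t < sem F f → 0 ≤ s → s < sem F g →
          t * s ≤ sem F (f * g) := by
        intro t s ht0 hta hs0 hsb
        have hWf : {y | ‖f y‖ < t}ᶜ ∈ F.sets :=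
          memC F (isClopen_norm_lt f t).compl
            (fun y hy => le_of_lt (show ‖f y‖ < t from not_not.mp hy)) hta
        have hWg : {y | ‖g y‖ < s}ᶜ ∈ F.sets :=
          memC F (isClopen_norm_lt g s).compl
            (fun y hy => le_of_lt (show ‖g y‖ < s from not_not.mp hy)) hsb
        refine le_sem F ?_
        intro U hU
        obtain ⟨y, hyU, hyf, hyg⟩ :=
          CU.nonempty_of_mem F (F.inter_mem U hU _ (F.inter_mem _ hWf _ hWg))
        have h1 : t ≤ ‖f y‖ := not_lt.mp hyf
        have h2 : s ≤ ‖g y‖ := not_lt.mp hyg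
        calc t * s ≤ ‖f y‖ * ‖g y‖ := mul_le_mul h1 h2 hs0 (norm_nonneg _)
          _ = ‖(f * g) y‖ := by rw [BoundedContinuousFunction.mul_apply, norm_mul]
          _ ≤ nsup (f * g) U := le_nsup _ hyU
      by_contra hcon
      push_neg at hcon
      set a := sem F f
      set b := sem F g
      set M := sem F (f * g) with hM
      have hM0 : 0 ≤ M := sem_nonneg F _
      set δ := min (a / 2) (min (b / 2) ((a * b - M) / (a + b))) with hδdef
      have hδ : 0 < δ :=
        lt_min (by linarith) (lt_min (by linarith) (div_pos (by linarith) (by linarith)))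
      have h1 : δ ≤ a / 2 := min_le_left _ _
      have h2 : δ ≤ b / 2 := (min_le_right _ _).trans (min_le_left _ _)
      have h3 : δ * (a + b) ≤ a * b - M := by
        have h4 : δ ≤ (a * b - M) / (a + b) := (min_le_right _ _).trans (min_le_right _ _)
        calc δ * (a + b) ≤ ((a * b - M) / (a + b)) * (a + b) :=
              mul_le_mul_of_nonneg_right h4 (by linarith)
          _ = a * b - M := div_mul_cancel₀ _ (by positivity)
      have h5 := key (a - δ) (b - δ) (by linarith) (by linarith) (by linarith) (by linarith)
      nlinarith [mul_pos hδ hδ]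
  algebraMap_eq := by
    intro a
    have hconst : ∀ y : X, (algebraMap k (BoundedContinuousFunction X k) a) y = a := by
      intro y
      rw [BoundedContinuousFunction.algebraMap_apply]
      simp
    have hns : ∀ U ∈ F.sets, nsup (algebraMap k (BoundedContinuousFunction X k) a) U = ‖a‖ := by
      intro U hU
      apply le_antisymm
      · exact nsup_le (norm_nonneg a) (fun y _ => by rw [hconst y])
      · obtain ⟨y, hy⟩ := CU.nonempty_of_mem F hU
        have h := le_nsup (algebraMap k (BoundedContinuousFunction X k) a) hy
        rwa [hconst y] at h
    apply le_antisymm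
    · exact (sem_le F (CU.univ_mem F)).trans (le_of_eq (hns _ (CU.univ_mem F)))
    · exact le_sem F (fun U hU => le_of_eq (hns U hU).symm)
  le_norm := fun f =>
    (sem_le F (CU.univ_mem F)).trans
      (nsup_le (norm_nonneg f) (fun y _ => f.norm_coe_le_norm y))

/-- Partial inverse of `f`, supported on a clopen set where `‖f‖ ≥ c`. -/
noncomputable def invBCF (f : BoundedContinuousFunction X k) {V : Set X} (hV : IsClopen V)
    (c : ℝ) (hc : 0 < c) (hf : ∀ y ∈ V, c ≤ ‖f y‖) : BoundedContinuousFunction X k :=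
  BoundedContinuousFunction.ofNormedAddCommGroup (V.indicator fun y => (f y)⁻¹)
    (by
      apply continuous_indicator
      · simp [hV]
      · rw [hV.isClosed.closure_eq]
        exact ContinuousOn.inv₀ f.continuous.continuousOn
          (fun y hy => norm_pos_iff.mp (hc.trans_le (hf y hy)))) c⁻¹
    (by
      intro y
      by_cases hy : y ∈ V
      · rw [Set.indicator_of_mem hy, norm_inv]
        exact inv_anti₀ hc (hf y hy)
      · rw [Set.indicator_of_notMem hy, norm_zero]
        exact inv_nonneg.mpr hc.le)

theorem mul_invBCF (f : BoundedContinuousFunction X k) {V : Set X} (hV : IsClopen V)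
    (c : ℝ) (hc : 0 < c) (hf : ∀ y ∈ V, c ≤ ‖f y‖) :
    f * invBCF f hV c hc hf = indicatorBCF k hV := by
  ext y
  rw [BoundedContinuousFunction.mul_apply]
  have h : invBCF f hV c hc hf y = V.indicator (fun z => (f z)⁻¹) y := rfl
  rw [h]
  by_cases hy : y ∈ V
  · rw [Set.indicator_of_mem hy, ind_apply_mem hV hy]
    exact mul_inv_cancel₀ (norm_pos_iff.mp (hc.trans_le (hf y hy)))
  · rw [Set.indicator_of_notMem hy, ind_apply_not_mem hV hy, mul_zero]

theorem norm_invBCF_le (f : BoundedContinuousFunction X k) {V : Set X} (hV : IsClopen V)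
    (c : ℝ) (hc : 0 < c) (hf : ∀ y ∈ V, c ≤ ‖f y‖) : ‖invBCF f hV c hc hf‖ ≤ c⁻¹ :=
  BoundedContinuousFunction.norm_ofNormedAddCommGroup_le _ (inv_nonneg.mpr hc.le) _

theorem sem_toUF (x : BerkovichPoint X k) (f : BoundedContinuousFunction X k) :
    sem (toUF x) f = x.toFun f := by
  apply le_antisymm
  · apply le_add_all
    intro ε hε
    set c := x.toFun f + ε with hc
    have hc0 : 0 < c := by have := x.nonneg f; simp only [hc]; linarith
    have hVc : IsClopen {y | ‖f y‖ < c} := isClopen_norm_lt f c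
    have hmem : {y | ‖f y‖ < c} ∈ (toUF x).sets := by
      refine ⟨hVc, fun h0 => ?_⟩
      have h1 : x.toFun (indicatorBCF k hVc.compl) = 1 := ind_compl_eq_one x hVc h0
      have hge : ∀ y ∈ {y | ‖f y‖ < c}ᶜ, c ≤ ‖f y‖ := fun y hy => not_lt.mp hy
      have hfh : f * invBCF f hVc.compl c hc0 hge = indicatorBCF k hVc.compl :=
        mul_invBCF f hVc.compl c hc0 hge
      have heq : (1 : ℝ) = x.toFun f * x.toFun (invBCF f hVc.compl c hc0 hge) := by
        rw [← h1, ← hfh, x.mul_eq]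
      have h2 : x.toFun (invBCF f hVc.compl c hc0 hge) ≤ c⁻¹ :=
        (x.le_norm _).trans (norm_invBCF_le f hVc.compl c hc0 hge)
      have h3 : x.toFun f * x.toFun (invBCF f hVc.compl c hc0 hge) ≤ x.toFun f * c⁻¹ :=
        mul_le_mul_of_nonneg_left h2 (x.nonneg f)
      have h4 : x.toFun f * c⁻¹ < 1 := by
        rw [← div_eq_mul_inv]
        exact (div_lt_one hc0).mpr (by linarith)
      linarith
    refine (sem_le (toUF x) hmem).trans (nsup_le ?_ ?_)
    · have := x.nonneg f; linarith
    · intro y hy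
      exact le_of_lt hy
  · refine le_sem (toUF x) ?_
    rintro U ⟨hU, hxU⟩
    have h1 : x.toFun (indicatorBCF k hU) = 1 := (ind_zero_or_one x hU).resolve_left hxU
    have hUne : U.Nonempty := CU.nonempty_of_mem (toUF x) ⟨hU, hxU⟩
    have h2 : x.toFun f = x.toFun (f * indicatorBCF k hU) := by
      rw [x.mul_eq, h1, mul_one]
    rw [h2]
    refine (x.le_norm _).trans ?_
    rw [BoundedContinuousFunction.norm_le (nsup_nonneg f hUne)]
    intro y
    rw [BoundedContinuousFunction.mul_apply]
    by_cases hy : y ∈ U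
    · rw [ind_apply_mem hU hy, mul_one]
      exact le_nsup f hy
    · rw [ind_apply_not_mem hU hy, mul_zero, norm_zero]
      exact nsup_nonneg f hUne

theorem toUF_ofUF (F : ClopenUltrafilter X) :
    toUF (ofUF F : BerkovichPoint X k) = F := by
  apply CU.ext'
  ext U
  constructor
  · rintro ⟨hU, hne⟩
    have hne' : sem F (indicatorBCF k hU) ≠ 0 := hne
    by_contra hUF
    have hUc : Uᶜ ∈ F.sets := (F.mem_or_compl_mem U hU).resolve_left hUF
    have hle : sem F (indicatorBCF k hU) ≤ 0 := by
      refine (sem_le F hUc).trans (nsup_le le_rfl ?_)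
      intro y hy
      rw [ind_apply_not_mem hU hy, norm_zero]
    exact hne' (le_antisymm hle (sem_nonneg F _))
  · intro hUF
    have hU : IsClopen U := F.isClopen_of_mem U hUF
    refine ⟨hU, ?_⟩
    have h1 : (1 : ℝ) ≤ sem F (indicatorBCF k hU) := by
      refine le_sem F ?_
      intro V hV
      obtain ⟨y, hyV, hyU⟩ := CU.nonempty_of_mem F (F.inter_mem V hV U hUF)
      have h := le_nsup (indicatorBCF k hU) hyV
      rwa [ind_apply_mem hU hyU, norm_one] at h
    intro h0
    have h0' : sem F (indicatorBCF k hU) = 0 := h0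
    rw [h0'] at h1
    linarith

/-- The bijection between Berkovich points and clopen ultrafilters. -/
noncomputable def berkoEquiv : BerkovichPoint X k ≃ ClopenUltrafilter X where
  toFun := toUF
  invFun := ofUF
  left_inv := fun x => BP.ext' (funext (fun f => sem_toUF x f))
  right_inv := toUF_ofUF

theorem continuous_toUF :
    Continuous (toUF : BerkovichPoint X k → ClopenUltrafilter X) := by
  apply continuous_generateFrom_iff.mpr
  rintro S ⟨U, hU, rfl⟩
  have h : toUF ⁻¹' {F : ClopenUltrafilter X | U ∈ F.sets} =
      (fun x : BerkovichPoint X k => x.toFun) ⁻¹' {φ | φ (indicatorBCF k hU) ≠ 0} := by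
    ext x
    simp only [Set.mem_preimage, Set.mem_setOf_eq]
    constructor
    · rintro ⟨h, hne⟩
      exact hne
    · intro h
      exact ⟨hU, h⟩
  rw [h]
  exact (isOpen_ne.preimage (continuous_apply (indicatorBCF k hU))).preimage
    continuous_induced_dom

theorem continuous_ofUF :
    Continuous (ofUF : ClopenUltrafilter X → BerkovichPoint X k) := by
  apply continuous_induced_rng.mpr
  apply continuous_pi
  intro f
  rw [continuous_iff_continuousAt]
  intro F
  refine Metric.tendsto_nhds.mpr ?_
  intro ε hε
  obtain ⟨U, hU, hnU⟩ := exists_sem_lt F (show sem F f < sem F f + ε / 2 by linarith)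
  set v := sem F f with hv
  set W := (f ⁻¹' Metric.ball 0 (v - ε / 2))ᶜ with hWdef
  have hWclopen : IsClopen W :=
    ((IsUltrametricDist.isClopen_ball (0 : k) (v - ε / 2)).preimage f.continuous).compl
  have hWmem : ∀ y ∈ W, v - ε / 2 ≤ ‖f y‖ := by
    intro y hy
    refine not_lt.mp (fun hlt => hy ?_)
    simpa [mem_ball_zero_iff] using hlt
  have hWF : W ∈ F.sets := by
    refine memC F (f := f) (t := v - ε / 2) hWclopen ?_ (by linarith)
    intro y hy
    have h := not_not.mp hy
    exact le_of_lt (by simpa [mem_ball_zero_iff] using h)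
  have hUW : U ∩ W ∈ F.sets := F.inter_mem U hU W hWF
  have hopen : IsOpen {G : ClopenUltrafilter X | U ∩ W ∈ G.sets} :=
    TopologicalSpace.isOpen_generateFrom_of_mem
      ⟨U ∩ W, (F.isClopen_of_mem U hU).inter hWclopen, rfl⟩
  refine Filter.eventually_of_mem (hopen.mem_nhds hUW) ?_
  intro G hG
  have hup : sem G f < v + ε / 2 := by
    refine lt_of_le_of_lt (sem_le G hG) (lt_of_le_of_lt ?_ hnU)
    exact nsup_le (nsup_nonneg f (CU.nonempty_of_mem F hU)) (fun y hy => le_nsup f hy.1)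
  have hdown : v - ε / 2 ≤ sem G f := by
    refine le_sem G ?_
    intro V hV
    obtain ⟨y, hyV, hyU, hyW⟩ := CU.nonempty_of_mem G (G.inter_mem V hV _ hG)
    exact (hWmem y hyW).trans (le_nsup f hyV)
  show dist (sem G f) (sem F f) < ε
  rw [Real.dist_eq, abs_sub_lt_iff]
  constructor <;> linarith

end BerkoAux

/-- The map sending a bounded multiplicative seminorm `x ∈ BSC_k(X)` to
`{U ∈ CO(X) : x(1_U) ≠ 0}` is a homeomorphism from Berkovich's spectrum `BSC_k(X)` onto the
space `UF(X)` of ultrafilters of the Boolean algebra of clopen subsets of `X`. -/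
theorem berkovichSpectrum_homeo_clopenUltrafilters {X : Type*} [TopologicalSpace X]
    (k : Type*) [NormedField k] [CompleteSpace k] [IsUltrametricDist k] :
    ∃ e : BerkovichPoint X k ≃ₜ ClopenUltrafilter X,
      ∀ x : BerkovichPoint X k,
        (e x).sets = {U : Set X | ∃ hU : IsClopen U, x.toFun (indicatorBCF k hU) ≠ 0} := by
  refine ⟨Homeomorph.mk berkoEquiv continuous_toUF continuous_ofUF, fun x => rfl⟩
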